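/- Let S = ℂ[z₀,z₁,…,zₙ] be the graded polynomial ring. Let f¹,…,f^{r₁} ∈ S^{r₀} be column vectors such that for each j all components of f^j are homogeneous of the same degree d_j and not every component of f^j is divisible by z₀ (so that f^j is the homogenization of its dehomogenization F^j, where F^j(z₁,…,zₙ) = f^j(1,z₁,…,zₙ) ∈ ℂ[z₁,…,zₙ]^{r₀}). Let J ⊆ S^{r₀} be the S-submodule generated by f¹,…,f^{r₁}. Assume that the quotient module S^{r₀}/J is Cohen–Macaulay and that z₀ does not belong to any associated prime ideal of S^{r₀}/J (i.e., no irreducible component of the zero set of J in ℙⁿ is contained in the hyperplane at infinity {z₀ = 0}). Then for every Φ ∈ ℂ[z₁,…,zₙ]^{r₀} belonging to the ℂ[z₁,…,zₙ]-submodule generated by F¹,…,F^{r₁}, there exist polynomials Ψ¹,…,Ψ^{r₁} ∈ ℂ[z₁,…,zₙ] such that F¹Ψ¹ + ⋯ + F^{r₁}Ψ^{r₁} = Φ and, for every j, every component of F^jΨ^j has total degree at most the total degree of Φ (the maximum of the total degrees of the components of Φ). -/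

import Mathlib

open MvPolynomial

/-- The depth of the module `M` with respect to the ideal `I`: the supremum of the
lengths of `M`-regular sequences consisting of elements of `I`. -/
noncomputable def idealDepth {R : Type*} [CommRing R] (I : Ideal R)
    (M : Type*) [AddCommGroup M] [Module R M] : ℕ∞ :=
  sSup {n : ℕ∞ | ∃ rs : List R, (∀ r ∈ rs, r ∈ I) ∧
    RingTheory.Sequence.IsRegular M rs ∧ (rs.length : ℕ∞) = n}

/-- The Krull dimension of the module `M` over `R`: the Krull dimension of
`R / (annihilator of M)`. -/
noncomputable def moduleKrullDim (R : Type*) [CommRing R]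
    (M : Type*) [AddCommGroup M] [Module R M] : WithBot ℕ∞ :=
  ringKrullDim (R ⧸ Module.annihilator R M)

/-- `M` is a Cohen–Macaulay `R`-module if for every prime `𝔭` in the support of `M`,
the depth of the localization `M_𝔭` with respect to the maximal ideal of `R_𝔭` equals
the Krull dimension of the module `M_𝔭` over `R_𝔭`. -/
def IsCohenMacaulayModule (R : Type*) [CommRing R]
    (M : Type*) [AddCommGroup M] [Module R M] : Prop :=
  ∀ 𝔭 : PrimeSpectrum R, 𝔭 ∈ Module.support R M →
    ((idealDepth (IsLocalRing.maximalIdeal (Localization.AtPrime 𝔭.asIdeal))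
        (LocalizedModule 𝔭.asIdeal.primeCompl M)) : WithBot ℕ∞)
      = moduleKrullDim (Localization.AtPrime 𝔭.asIdeal)
          (LocalizedModule 𝔭.asIdeal.primeCompl M)

namespace MaxNoetherAux

/-- Dehomogenization: set `z₀ = 1`. -/
noncomputable def dehom (n : ℕ) : MvPolynomial (Fin (n+1)) ℂ →ₐ[ℂ] MvPolynomial (Fin n) ℂ :=
  aeval (Fin.cases 1 fun i => X i)

lemma dehom_rename (n : ℕ) (q : MvPolynomial (Fin n) ℂ) :
    dehom n (rename Fin.succ q) = q := by
  rw [dehom, aeval_rename]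
  have h : ((Fin.cases 1 fun i => X i) ∘ Fin.succ : Fin n → MvPolynomial (Fin n) ℂ) = X := by
    funext i; simp
  rw [h, aeval_X_left_apply]

lemma dehom_X0 (n : ℕ) : dehom n (X 0) = 1 := by
  simp [dehom]

/-- Homogenization of `p` to degree `t` using the extra variable `z₀`. -/
noncomputable def homog (n t : ℕ) (p : MvPolynomial (Fin n) ℂ) : MvPolynomial (Fin (n+1)) ℂ :=
  ∑ k ∈ Finset.range (t+1), X 0 ^ (t - k) * rename Fin.succ (homogeneousComponent k p)

lemma homog_isHomogeneous (n t : ℕ) (p : MvPolynomial (Fin n) ℂ) :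
    (homog n t p).IsHomogeneous t := by
  apply IsHomogeneous.sum
  intro k hk
  have h1 : ((X 0 : MvPolynomial (Fin (n+1)) ℂ) ^ (t-k)).IsHomogeneous (t-k) := by
    simpa using (isHomogeneous_X ℂ (0 : Fin (n+1))).pow (t-k)
  have h2 : (rename Fin.succ (homogeneousComponent k p)).IsHomogeneous k :=
    (homogeneousComponent_isHomogeneous k p).rename_isHomogeneous
  have h3 := h1.mul h2
  rwa [Nat.sub_add_cancel (Nat.lt_succ_iff.mp (Finset.mem_range.mp hk))] at h3

lemma dehom_homog (n t : ℕ) (p : MvPolynomial (Fin n) ℂ) (h : p.totalDegree ≤ t) :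
    dehom n (homog n t p) = p := by
  rw [homog, map_sum]
  rw [Finset.sum_congr rfl (fun k _ => by
    rw [map_mul, map_pow, dehom_X0, one_pow, one_mul, dehom_rename])]
  calc ∑ k ∈ Finset.range (t+1), homogeneousComponent k p
      = ∑ k ∈ Finset.range (p.totalDegree + 1), homogeneousComponent k p := by
        refine (Finset.sum_subset (Finset.range_subset_range.mpr (by omega)) ?_).symm
        intro k _ hk
        refine homogeneousComponent_eq_zero _ p ?_
        simp only [Finset.mem_range] at hk
        omega
    _ = p := sum_homogeneousComponent p

lemma eval_smul_isHomogeneous {m a : ℕ} {p : MvPolynomial (Fin m) ℂ} (hp : p.IsHomogeneous a)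
    (c : ℂ) (r : Fin m → ℂ) : eval (c • r) p = c ^ a * eval r p := by
  rw [eval_eq', eval_eq', Finset.mul_sum]
  refine Finset.sum_congr rfl fun v hv => ?_
  have hdeg : v.degree = a := by
    by_contra h
    exact mem_support_iff.mp hv (hp.coeff_eq_zero h)
  have hsum : ∑ i, v i = a := by
    rw [← hdeg, Finsupp.degree]
    exact (Finset.sum_subset (Finset.subset_univ _) (fun i _ hi => by
      simpa using Finsupp.notMem_support_iff.mp hi)).symm
  have : ∏ i, (c • r) i ^ v i = c ^ a * ∏ i, r i ^ v i := by
    simp only [Pi.smul_apply, smul_eq_mul, mul_pow]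
    rw [Finset.prod_mul_distrib, Finset.prod_pow_eq_pow_sum, hsum]
  rw [this]; ring

lemma eq_zero_of_dehom_eq_zero {n a : ℕ} {p : MvPolynomial (Fin (n+1)) ℂ}
    (hp : p.IsHomogeneous a)
    (h : aeval (Fin.cases 1 fun i => X i : Fin (n+1) → MvPolynomial (Fin n) ℂ) p = 0) :
    p = 0 := by
  have key : ∀ v : Fin n → ℂ,
      eval (Fin.cases 1 v : Fin (n+1) → ℂ) p
        = eval v (aeval (Fin.cases 1 fun i => X i : Fin (n+1) → MvPolynomial (Fin n) ℂ) p) := by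
    intro v
    rw [aeval_def, eval₂_comp_left (eval v)]
    rw [show ((eval v : MvPolynomial (Fin n) ℂ →+* ℂ).comp (algebraMap ℂ _)) = RingHom.id ℂ by
      ext a; simp [algebraMap_eq]]
    rw [show ((eval v : MvPolynomial (Fin n) ℂ →+* ℂ) ∘ (Fin.cases 1 fun i => X i))
        = (Fin.cases 1 v : Fin (n+1) → ℂ) by
      funext i
      induction i using Fin.cases <;> simp]
    rfl
  have hX : (X 0 * p : MvPolynomial (Fin (n+1)) ℂ) = 0 := by
    apply ((isHomogeneous_X ℂ (0 : Fin (n+1))).mul hp).eq_zero_of_forall_eval_eq_zero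
    intro r
    rw [eval_mul, eval_X]
    rcases eq_or_ne (r 0) 0 with h0 | h0
    · rw [h0, zero_mul]
    · have hr : r = r 0 • ((r 0)⁻¹ • r) := by
        rw [smul_smul, mul_inv_cancel₀ h0, one_smul]
      have hu : ((r 0)⁻¹ • r : Fin (n+1) → ℂ)
          = Fin.cases 1 (fun i => ((r 0)⁻¹ • r) i.succ) := by
        funext i
        induction i using Fin.cases with
        | zero => simp [inv_mul_cancel₀ h0]
        | succ j => simp
      have : eval r p = 0 := by
        conv_lhs => rw [hr]
        rw [eval_smul_isHomogeneous hp, hu, key, h, map_zero, mul_zero]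
      rw [this, mul_zero]
  rcases mul_eq_zero.mp hX with h1 | h1
  · exact absurd h1 (X_ne_zero 0)
  · exact h1

lemma homogeneousComponent_mul_right {n d t : ℕ} (a b : MvPolynomial (Fin n) ℂ)
    (hb : b.IsHomogeneous d) :
    homogeneousComponent t (a * b) =
      (if d ≤ t then homogeneousComponent (t - d) a else 0) * b := by
  set K := max a.totalDegree t + 1 with hK
  have ha : a = ∑ k ∈ Finset.range K, homogeneousComponent k a := by
    refine Eq.symm ?_
    calc ∑ k ∈ Finset.range K, homogeneousComponent k a
        = ∑ k ∈ Finset.range (a.totalDegree + 1), homogeneousComponent k a := by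
          refine (Finset.sum_subset (Finset.range_subset_range.mpr (by omega)) ?_).symm
          intro k _ hk
          refine homogeneousComponent_eq_zero _ a ?_
          simp only [Finset.mem_range] at hk; omega
      _ = a := sum_homogeneousComponent a
  calc homogeneousComponent t (a * b)
      = homogeneousComponent t (∑ k ∈ Finset.range K, homogeneousComponent k a * b) := by
        rw [← Finset.sum_mul, ← ha]
    _ = ∑ k ∈ Finset.range K, homogeneousComponent t (homogeneousComponent k a * b) :=
        map_sum _ _ _
    _ = ∑ k ∈ Finset.range K, if t = k + d then homogeneousComponent k a * b else 0 := by
        refine Finset.sum_congr rfl fun k _ => ?_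
        exact homogeneousComponent_of_mem
          ((mem_homogeneousSubmodule _ _).mpr
            ((homogeneousComponent_isHomogeneous k a).mul hb))
    _ = (if d ≤ t then homogeneousComponent (t - d) a else 0) * b := by
        by_cases hd : d ≤ t
        · rw [if_pos hd]
          rw [Finset.sum_eq_single_of_mem (t - d) (Finset.mem_range.mpr (by omega))]
          · rw [if_pos (by omega)]
          · intro k _ hk
            rw [if_neg (by omega)]
        · rw [if_neg hd, zero_mul]
          refine Finset.sum_eq_zero fun k _ => ?_
          rw [if_neg (by omega)]

lemma totalDegree_dehom_le (n : ℕ) (q : MvPolynomial (Fin (n+1)) ℂ) :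
    ((aeval (Fin.cases 1 fun i => X i : Fin (n+1) → MvPolynomial (Fin n) ℂ) q)).totalDegree
      ≤ q.totalDegree := by
  conv_lhs => rw [q.as_sum]
  rw [map_sum]
  refine (totalDegree_finset_sum _ _).trans ?_
  refine Finset.sup_le fun v hv => ?_
  rw [aeval_monomial]
  refine (totalDegree_mul _ _).trans ?_
  have h1 : (algebraMap ℂ (MvPolynomial (Fin n) ℂ) (coeff v q)).totalDegree = 0 := by
    rw [algebraMap_eq]; exact totalDegree_C _
  rw [h1, zero_add]
  refine le_trans ?_ (le_totalDegree hv)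
  rw [Finsupp.prod]
  refine (totalDegree_finset_prod _ _).trans ?_
  refine le_trans (Finset.sum_le_sum fun i _ => ?_) le_rfl
  refine (totalDegree_pow _ _).trans ?_
  have : ((Fin.cases 1 fun i => X i : Fin (n+1) → MvPolynomial (Fin n) ℂ) i).totalDegree ≤ 1 := by
    induction i using Fin.cases with
    | zero => simp
    | succ j => simp [totalDegree_X]
  calc v i * ((Fin.cases 1 fun i => X i : Fin (n+1) → MvPolynomial (Fin n) ℂ) i).totalDegree
      ≤ v i * 1 := Nat.mul_le_mul_left _ this
    _ = v i := Nat.mul_one _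

end MaxNoetherAux

open MaxNoetherAux in
/-- **Generalized Max Noether `AF+BG` theorem.**
Let `f¹,…,f^{r₁} ∈ S^{r₀}`, `S = ℂ[z₀,…,zₙ]`, be columns whose components are
homogeneous of degree `dⱼ` and not all divisible by `z₀`, generating the graded
submodule `J ⊆ S^{r₀}`. Assume `S^{r₀}/J` is Cohen–Macaulay and `z₀` lies in no
associated prime of `S^{r₀}/J`. If `Φ` lies in the `ℂ[z₁,…,zₙ]`-submodule generated
by the dehomogenizations `Fʲ = fʲ(1,z₁,…,zₙ)`, then `Φ = ∑ⱼ Ψʲ•Fʲ` with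
`deg (FʲᵢΨʲ) ≤ deg Φ` for all `i,j`. -/
theorem generalized_max_noether (n r₀ r₁ : ℕ)
    (d : Fin r₁ → ℕ)
    (f : Fin r₁ → (Fin r₀ → MvPolynomial (Fin (n + 1)) ℂ))
    (hhom : ∀ j i, (f j i).IsHomogeneous (d j))
    (hz0 : ∀ j, ∃ i, ¬ (X 0 : MvPolynomial (Fin (n + 1)) ℂ) ∣ f j i)
    (hCM : IsCohenMacaulayModule (MvPolynomial (Fin (n + 1)) ℂ)
      ((Fin r₀ → MvPolynomial (Fin (n + 1)) ℂ) ⧸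
        Submodule.span (MvPolynomial (Fin (n + 1)) ℂ) (Set.range f)))
    (hass : ∀ 𝔭 ∈ associatedPrimes (MvPolynomial (Fin (n + 1)) ℂ)
      ((Fin r₀ → MvPolynomial (Fin (n + 1)) ℂ) ⧸
        Submodule.span (MvPolynomial (Fin (n + 1)) ℂ) (Set.range f)),
      (X 0 : MvPolynomial (Fin (n + 1)) ℂ) ∉ 𝔭)
    (F : Fin r₁ → (Fin r₀ → MvPolynomial (Fin n) ℂ))
    (hF : ∀ j i, F j i = aeval (Fin.cases 1 fun i => X i) (f j i))
    (Φ : Fin r₀ → MvPolynomial (Fin n) ℂ)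
    (hΦ : Φ ∈ Submodule.span (MvPolynomial (Fin n) ℂ) (Set.range F)) :
    ∃ Ψ : Fin r₁ → MvPolynomial (Fin n) ℂ,
      (∑ j, Ψ j • F j = Φ) ∧
      ∀ j i, (Ψ j * F j i).totalDegree ≤ Finset.univ.sup fun i => (Φ i).totalDegree := by
  classical
  set t := Finset.univ.sup fun i => (Φ i).totalDegree with ht
  have hΦt : ∀ i, (Φ i).totalDegree ≤ t := fun i => by rw [ht]; exact Finset.le_sup (f := fun i => (Φ i).totalDegree) (Finset.mem_univ i)
  have hFD : ∀ j i, F j i = dehom n (f j i) := fun j i => by rw [hF]; rfl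
  obtain ⟨c, hc⟩ := Submodule.mem_span_range_iff_exists_fun _ |>.mp hΦ
  set e : Fin r₁ → ℕ := fun j => (c j).totalDegree with he
  set N := max t (Finset.univ.sup fun j => d j + e j) with hN
  have htN : t ≤ N := le_max_left _ _
  have hdeN : ∀ j, d j + e j ≤ N :=
    fun j => le_trans (Finset.le_sup (f := fun j => d j + e j) (Finset.mem_univ j)) (le_max_right _ _)
  set φ : Fin r₀ → MvPolynomial (Fin (n+1)) ℂ := fun i => homog n t (Φ i) with hφ
  have hφhom : ∀ i, (φ i).IsHomogeneous t := fun i => homog_isHomogeneous n t (Φ i)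
  have hDφ : ∀ i, dehom n (φ i) = Φ i := fun i => dehom_homog n t (Φ i) (hΦt i)
  set g : Fin r₀ → MvPolynomial (Fin (n+1)) ℂ :=
    fun i => ∑ j, (X 0 ^ (N - (d j + e j)) * homog n (e j) (c j)) * f j i with hg
  have hghom : ∀ i, (g i).IsHomogeneous N := by
    intro i
    apply MvPolynomial.IsHomogeneous.sum
    intro j _
    have h1 : ((X 0 : MvPolynomial (Fin (n+1)) ℂ) ^ (N - (d j + e j))).IsHomogeneous (N - (d j + e j)) := by
      simpa using (isHomogeneous_X ℂ (0 : Fin (n+1))).pow (N - (d j + e j))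
    have h2 := (h1.mul (homog_isHomogeneous n (e j) (c j))).mul (hhom j i)
    have : N - (d j + e j) + e j + d j = N := by have := hdeN j; omega
    rwa [this] at h2
  have hDg : ∀ i, dehom n (g i) = Φ i := by
    intro i
    rw [hg, map_sum]
    have : ∀ j, dehom n ((X 0 ^ (N - (d j + e j)) * homog n (e j) (c j)) * f j i)
        = c j * F j i := by
      intro j
      rw [map_mul, map_mul, map_pow, dehom_X0, one_pow, one_mul,
        dehom_homog n (e j) (c j) le_rfl, hFD]
    rw [Finset.sum_congr rfl fun j _ => this j]
    have := congrFun hc i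
    simpa [Finset.sum_apply] using this
  have hkey : ∀ i, X 0 ^ (N - t) * φ i = g i := by
    intro i
    have hhom1 : ((X 0 : MvPolynomial (Fin (n+1)) ℂ) ^ (N - t) * φ i).IsHomogeneous N := by
      have h1 : ((X 0 : MvPolynomial (Fin (n+1)) ℂ) ^ (N - t)).IsHomogeneous (N - t) := by
        simpa using (isHomogeneous_X ℂ (0 : Fin (n+1))).pow (N - t)
      have := h1.mul (hφhom i)
      rwa [Nat.sub_add_cancel htN] at this
    have hsub : ((X 0 : MvPolynomial (Fin (n+1)) ℂ) ^ (N - t) * φ i - g i).IsHomogeneous N := hhom1.sub (hghom i)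
    have hd0 : dehom n (X 0 ^ (N - t) * φ i - g i) = 0 := by
      rw [map_sub, map_mul, map_pow, dehom_X0, one_pow, one_mul, hDφ, hDg, sub_self]
    have := eq_zero_of_dehom_eq_zero hsub hd0
    exact sub_eq_zero.mp this
  have hgJ : (X 0 : MvPolynomial (Fin (n+1)) ℂ) ^ (N - t) • φ ∈ Submodule.span (MvPolynomial (Fin (n+1)) ℂ) (Set.range f) := by
    have hφg : (X 0 : MvPolynomial (Fin (n+1)) ℂ) ^ (N - t) • φ
        = ∑ j, (X 0 ^ (N - (d j + e j)) * homog n (e j) (c j)) • f j := by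
      funext i
      rw [Finset.sum_apply]
      simp only [Pi.smul_apply, smul_eq_mul]
      rw [hkey i, hg]
    rw [hφg]
    exact Submodule.sum_mem _ fun j _ =>
      Submodule.smul_mem _ _ (Submodule.subset_span ⟨j, rfl⟩)
  -- X 0 is regular on the quotient
  have hreg : ∀ (k : ℕ) (m : (Fin r₀ → MvPolynomial (Fin (n+1)) ℂ) ⧸ Submodule.span (MvPolynomial (Fin (n+1)) ℂ) (Set.range f)), (X 0 : MvPolynomial (Fin (n+1)) ℂ) ^ k • m = 0 → m = 0 := by
    intro k
    induction k with
    | zero => intro m hm; simpa using hm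
    | succ k ih =>
      intro m hm
      rcases eq_or_ne ((X 0 : MvPolynomial (Fin (n+1)) ℂ) ^ k • m) 0 with h' | h'
      · exact ih m h'
      · exfalso
        obtain ⟨P, hP, hle⟩ :=
          exists_le_isAssociatedPrime_of_isNoetherianRing (MvPolynomial (Fin (n+1)) ℂ) ((X 0 : MvPolynomial (Fin (n+1)) ℂ) ^ k • m) h'
        refine hass P hP (hle ?_)
        rw [Submodule.mem_colon_singleton, Submodule.mem_bot]
        rw [pow_succ'] at hm
        rwa [smul_smul]
  have hφJ : φ ∈ Submodule.span (MvPolynomial (Fin (n+1)) ℂ) (Set.range f) := by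
    have hmk : ((X 0 : MvPolynomial (Fin (n+1)) ℂ) ^ (N - t)) • (Submodule.Quotient.mk φ : (Fin r₀ → MvPolynomial (Fin (n+1)) ℂ) ⧸ Submodule.span (MvPolynomial (Fin (n+1)) ℂ) (Set.range f)) = 0 := by
      rw [← Submodule.Quotient.mk_smul, Submodule.Quotient.mk_eq_zero]
      exact hgJ
    have := hreg (N - t) (Submodule.Quotient.mk φ) hmk
    exact (Submodule.Quotient.mk_eq_zero _).mp this
  obtain ⟨a, haf⟩ := Submodule.mem_span_range_iff_exists_fun _ |>.mp hφJ
  set ψ : Fin r₁ → MvPolynomial (Fin (n+1)) ℂ := fun j => if d j ≤ t then homogeneousComponent (t - d j) (a j) else 0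
    with hψ
  have hsum : ∀ i, ∑ j, ψ j * f j i = φ i := by
    intro i
    have h1 : homogeneousComponent t (φ i) = φ i := by
      rw [homogeneousComponent_of_mem ((mem_homogeneousSubmodule _ _).mpr (hφhom i))]
      simp
    calc ∑ j, ψ j * f j i
        = ∑ j, homogeneousComponent t (a j * f j i) := by
          refine Finset.sum_congr rfl fun j _ => ?_
          rw [homogeneousComponent_mul_right (a j) (f j i) (hhom j i)]
      _ = homogeneousComponent t (∑ j, a j * f j i) := (map_sum _ _ _).symm
      _ = homogeneousComponent t (φ i) := by
          have := congrFun haf i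
          simp only [Finset.sum_apply, Pi.smul_apply, smul_eq_mul] at this
          rw [this]
      _ = φ i := h1
  refine ⟨fun j => dehom n (ψ j), ?_, ?_⟩
  · funext i
    rw [Finset.sum_apply]
    have h2 : ∀ j, (dehom n (ψ j) • F j) i = dehom n (ψ j * f j i) := by
      intro j
      rw [Pi.smul_apply, smul_eq_mul, map_mul, hFD]
    rw [Finset.sum_congr rfl fun j _ => h2 j, ← map_sum, hsum i, hDφ i]
  · intro j i
    by_cases hdj : d j ≤ t
    · have hψhom : (ψ j * f j i).IsHomogeneous t := by
        have h3 := (homogeneousComponent_isHomogeneous (t - d j) (a j)).mul (hhom j i)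
        rw [hψ]
        simp only [if_pos hdj]
        rwa [Nat.sub_add_cancel hdj] at h3
      have h4 : dehom n (ψ j) * F j i = dehom n (ψ j * f j i) := by
        rw [map_mul, hFD]
      rw [h4]
      exact le_trans (totalDegree_dehom_le n _) hψhom.totalDegree_le
    · have hz : ψ j = 0 := by rw [hψ]; simp [hdj]
      simp only [hz, map_zero, zero_mul, totalDegree_zero]
      exact Nat.zero_le _
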